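/- Let X ⊂ P^n be an irreducible hypersurface over ℂ of degree d with n ≥ 2d. Then any two points of X can be joined by a connected chain of two lines contained in X. -/

import Mathlib

open MvPolynomial

noncomputable section

/-- Complex projective `n`-space, as the projectivization of `ℂ^{n+1}`. -/
abbrev Pn (n : ℕ) := Projectivization ℂ (Fin (n + 1) → ℂ)

/-- The common zero locus in `ℙ^n` of a set of polynomials: the points all of whose
homogeneous representatives are zeros of every polynomial in the set. -/
def algZeroLocus (n : ℕ) (F : Set (MvPolynomial (Fin (n + 1)) ℂ)) : Set (Pn n) :=
  {p | ∀ f ∈ F, ∀ v : Fin (n + 1) → ℂ, v ∈ Projectivization.submodule p → eval v f = 0}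

/-- A subset of `ℙ^n` is (Zariski-)closed if it is the common zero locus of a set of
polynomials. -/
def IsAlgClosedSet (n : ℕ) (S : Set (Pn n)) : Prop :=
  ∃ F, S = algZeroLocus n F

/-- A subset of `ℙ^n` is an irreducible variety if it is nonempty and cannot be covered by
two closed sets without being contained in one of them. -/
def IsIrrVariety (n : ℕ) (S : Set (Pn n)) : Prop :=
  S.Nonempty ∧ ∀ C₁ C₂ : Set (Pn n), IsAlgClosedSet n C₁ → IsAlgClosedSet n C₂ →
    S ⊆ C₁ ∪ C₂ → S ⊆ C₁ ∨ S ⊆ C₂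

/-- The dimension of a subset of `ℙ^n`: the supremum of lengths of strictly increasing chains
of irreducible closed subvarieties contained in it. -/
def algDim (n : ℕ) (S : Set (Pn n)) : ℕ∞ :=
  sSup {m : ℕ∞ | ∃ k : ℕ, m = (k : ℕ∞) ∧ ∃ c : Fin (k + 1) → Set (Pn n),
    StrictMono c ∧ ∀ i, IsAlgClosedSet n (c i) ∧ IsIrrVariety n (c i) ∧ c i ⊆ S}

/-- The projective line (or point) spanned by two points of `ℙ^n`. -/
def lineThrough (n : ℕ) (p q : Pn n) : Set (Pn n) :=
  {x | Projectivization.submodule x ≤ Projectivization.submodule p ⊔ Projectivization.submodule q}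

/-- A line in `ℙ^n`: the projectivization of a 2-dimensional linear subspace. -/
def IsLine (n : ℕ) (l : Set (Pn n)) : Prop :=
  ∃ W : Submodule ℂ (Fin (n + 1) → ℂ), Module.finrank ℂ W = 2 ∧
    l = {x | Projectivization.submodule x ≤ W}

/-- The linear span in `ℙ^n` of an effective divisor (a multiset of points). -/
def linSpan (n : ℕ) (D : Multiset (Pn n)) : Set (Pn n) :=
  {x | Projectivization.submodule x ≤
    Submodule.span ℂ (⋃ p ∈ {p : Pn n | p ∈ D}, (Projectivization.submodule p : Set (Fin (n + 1) → ℂ)))}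

/-- The `r`-th secant variety of a subset `C` of `ℙ^n`: the union of the linear spans of all
effective divisors of degree `r` supported on `C`. -/
def secantVariety (n : ℕ) (r : ℕ) (C : Set (Pn n)) : Set (Pn n) :=
  ⋃ D ∈ {D : Multiset (Pn n) | Multiset.card D = r ∧ ∀ p ∈ D, p ∈ C}, linSpan n D

end


namespace Stmt11Aux

/-- partial-sum operator -/
def S (f : ℕ → ℕ) : ℕ → ℕ := fun j => ∑ i ∈ Finset.range (j + 1), f i

/-- iterated partial-sum operator -/
def Sit : ℕ → (ℕ → ℕ) → (ℕ → ℕ)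
  | 0, f => f
  | (k+1), f => S (Sit k f)

lemma S_mono {f g : ℕ → ℕ} (h : ∀ j, f j ≤ g j) : ∀ j, S f j ≤ S g j := by
  intro j; exact Finset.sum_le_sum fun i _ => h i

lemma le_S (f : ℕ → ℕ) (j : ℕ) : f j ≤ S f j :=
  Finset.single_le_sum (fun i _ => Nat.zero_le _) (Finset.self_mem_range_succ j)

lemma S_mono_arg (f : ℕ → ℕ) {j j' : ℕ} (h : j ≤ j') : S f j ≤ S f j' :=
  Finset.sum_le_sum_of_subset (Finset.range_subset_range.2 (by omega))

lemma Sit_succ_eq (k : ℕ) (f : ℕ → ℕ) : Sit (k+1) f = Sit k (S f) := by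
  induction k with
  | zero => rfl
  | succ k ih => show S (Sit (k+1) f) = S (Sit k (S f)); rw [ih]

lemma sum_ite_shift (cc : ℕ → ℕ) (e : ℕ) :
    ∀ j, (∑ i ∈ Finset.range (j + 1), (if e ≤ i then cc (i - e) else 0)) =
      if e ≤ j then S cc (j - e) else 0 := by
  intro j
  induction j with
  | zero =>
    rcases Nat.eq_zero_or_pos e with rfl | he
    · simp [S]
    · simp [Nat.not_le.2 he, Finset.sum_range_succ]
  | succ j ih =>
    rw [Finset.sum_range_succ, ih]
    by_cases h1 : e ≤ j
    · have h2 : e ≤ j + 1 := by omega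
      have h3 : j + 1 - e = (j - e) + 1 := by omega
      simp only [if_pos h1, if_pos h2, S, h3, Finset.sum_range_succ]
    · by_cases h2 : e ≤ j + 1
      · have he : e = j + 1 := by omega
        simp only [if_neg h1, if_pos h2, S, he, Nat.sub_self]
        simp
      · simp [if_neg h1, if_neg h2]

lemma S_step {a b cc : ℕ → ℕ} {e : ℕ}
    (h : ∀ j, a j ≤ b j + (if e ≤ j then cc (j - e) else 0)) :
    ∀ j, S a j ≤ S b j + (if e ≤ j then S cc (j - e) else 0) := by
  intro j
  calc S a j ≤ ∑ i ∈ Finset.range (j+1), (b i + (if e ≤ i then cc (i - e) else 0)) :=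
        Finset.sum_le_sum fun i _ => h i
    _ = S b j + ∑ i ∈ Finset.range (j+1), (if e ≤ i then cc (i - e) else 0) :=
        Finset.sum_add_distrib
    _ = S b j + (if e ≤ j then S cc (j - e) else 0) := by rw [sum_ite_shift]

lemma Sit_step {a b cc : ℕ → ℕ} {e : ℕ}
    (h : ∀ j, a j ≤ b j + (if e ≤ j then cc (j - e) else 0)) (m : ℕ) :
    ∀ j, Sit m a j ≤ Sit m b j + (if e ≤ j then Sit m cc (j - e) else 0) := by
  induction m with
  | zero => exact h
  | succ m ih => exact S_step ih

lemma S_le_of_supported {f : ℕ → ℕ} {M : ℕ} (h : ∀ i, M ≤ i → f i = 0) (j : ℕ) :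
    S f j ≤ S f M := by
  rcases le_or_gt j M with hj | hj
  · exact S_mono_arg f hj
  · unfold S
    rw [Finset.sum_subset (Finset.range_subset_range.2 (by omega : M + 1 ≤ j + 1))]
    intro x hx hx'
    exact h x (by simp at hx'; omega)

lemma sum_range_choose_add (k : ℕ) : ∀ j, (∑ i ∈ Finset.range (j+1), (i + k).choose k) =
    (j + k + 1).choose (k + 1) := by
  intro j
  induction j with
  | zero => simp
  | succ j ih =>
    rw [Finset.sum_range_succ, ih]
    have : j + 1 + k + 1 = (j + k + 1) + 1 := by omega
    rw [this, Nat.choose_succ_succ (j + k + 1) k]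
    have e1 : j + 1 + k = j + k + 1 := by omega
    rw [e1]
    simp only [Nat.succ_eq_add_one]
    omega

lemma Sit_le_choose {g : ℕ → ℕ} {D : ℕ} (hg : ∀ j, g j ≤ D) (k : ℕ) :
    ∀ j, Sit k g j ≤ D * (j + k).choose k := by
  induction k with
  | zero => intro j; simpa [Sit] using hg j
  | succ k ih =>
    intro j
    calc Sit (k+1) g j = ∑ i ∈ Finset.range (j+1), Sit k g i := rfl
      _ ≤ ∑ i ∈ Finset.range (j+1), D * (i + k).choose k := Finset.sum_le_sum fun i _ => ih i
      _ = D * ∑ i ∈ Finset.range (j+1), (i + k).choose k := by rw [Finset.mul_sum]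
      _ = D * (j + k + 1).choose (k+1) := by rw [sum_range_choose_add]
      _ = D * (j + (k+1)).choose (k+1) := by ring_nf


open MvPolynomial

variable {σ : Type*}

lemma hc_mul_right {g r : MvPolynomial σ ℂ} {dg : ℕ} (hg : g.IsHomogeneous dg) (m : ℕ) :
    homogeneousComponent m (r * g) =
      if dg ≤ m then (homogeneousComponent (m - dg) r) * g else 0 := by
  induction r using MvPolynomial.induction_on' with
  | monomial a co =>
    have hmem : (monomial a co * g).IsHomogeneous (a.degree + dg) :=
      (isHomogeneous_monomial co rfl).mul hg
    rw [homogeneousComponent_of_mem hmem]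
    have h2 : homogeneousComponent (m - dg) (monomial a co) =
        if m - dg = a.degree then monomial a co else 0 :=
      homogeneousComponent_of_mem (isHomogeneous_monomial co rfl)
    by_cases h : dg ≤ m
    · rw [if_pos h, h2]
      by_cases h3 : m = a.degree + dg
      · rw [if_pos h3, if_pos (by omega)]
      · rw [if_neg h3, if_neg (by omega), zero_mul]
    · rw [if_neg h, if_neg (by omega)]
  | add p q hp hq =>
    rw [add_mul, map_add, hp, hq]
    by_cases h : dg ≤ m
    · simp only [if_pos h, map_add, add_mul]
    · simp only [if_neg h, add_zero]

lemma hc_mem_span {Sg : Set (MvPolynomial σ ℂ)} (hSg : ∀ g ∈ Sg, ∃ d, g.IsHomogeneous d)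
    {p : MvPolynomial σ ℂ} (hp : p ∈ Ideal.span Sg) (m : ℕ) :
    homogeneousComponent m p ∈ Ideal.span Sg := by
  rw [Ideal.span, Submodule.mem_span_set] at hp
  obtain ⟨c, hcs, rfl⟩ := hp
  rw [Finsupp.sum, map_sum]
  refine Submodule.sum_mem _ fun g hgt => ?_
  obtain ⟨dg, hdg⟩ := hSg g (hcs hgt)
  rw [smul_eq_mul, hc_mul_right hdg]
  by_cases h : dg ≤ m
  · rw [if_pos h]
    exact Ideal.mul_mem_left _ _ (Ideal.subset_span (hcs hgt))
  · rw [if_neg h]; exact Submodule.zero_mem _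

lemma monomial_mem_of_exp_ge {I : Ideal (MvPolynomial σ ℂ)} {i : σ} {mi : ℕ}
    (hXi : X i ^ mi ∈ I) {a : σ →₀ ℕ} (ha : mi ≤ a i) (co : ℂ) :
    monomial a co ∈ I := by
  have key : monomial a co = monomial (a - Finsupp.single i mi) co * X i ^ mi := by
    rw [X_pow_eq_monomial, monomial_mul, mul_one]
    congr 1
    rw [tsub_add_cancel_of_le]
    exact (Finsupp.single_le_iff).2 ha
  rw [key]
  exact Ideal.mul_mem_left _ _ hXi

lemma homogeneous_mem_of_degree_ge {N : ℕ} (hN : 0 < N) {I : Ideal (MvPolynomial (Fin N) ℂ)}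
    {mi : Fin N → ℕ} (hXi : ∀ i, X i ^ mi i ∈ I)
    {j : ℕ} (hj : (∑ i, mi i) ≤ j) {p : MvPolynomial (Fin N) ℂ}
    (hp : p.IsHomogeneous j) : p ∈ I := by
  rw [← support_sum_monomial_coeff p]
  refine Submodule.sum_mem _ fun a ha => ?_
  rw [mem_support_iff] at ha
  have hdeg : a.degree = j := by
    rw [Finsupp.degree_eq_weight_one]
    exact hp ha
  have hex : ∃ i, mi i ≤ a i := by
    by_contra hcon
    push_neg at hcon
    have hNpos : 0 < N := hN
    have hlt : a.degree ≤ ∑ i, a i := by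
      rw [Finsupp.degree]
      exact Finset.sum_le_sum_of_subset (Finset.subset_univ _)
    have : (∑ i, a i) < ∑ i, mi i := by
      refine Finset.sum_lt_sum_of_nonempty ⟨⟨0, hNpos⟩, Finset.mem_univ _⟩ ?_
      intro i _
      exact hcon i
    omega
  obtain ⟨i, hi⟩ := hex
  exact monomial_mem_of_exp_ge (hXi i) hi _


section Hilbert

variable {N : ℕ}

/-- degree-j homogeneous part -/
noncomputable abbrev Vh (N j : ℕ) : Submodule ℂ (MvPolynomial (Fin N) ℂ) := homogeneousSubmodule (Fin N) ℂ j

instance instFdVh (N j : ℕ) : FiniteDimensional ℂ (Vh N j) := by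
  apply Submodule.finiteDimensional_of_le (S₂ := restrictTotalDegree (Fin N) ℂ j)
  intro p hp
  rw [mem_restrictTotalDegree]
  exact IsHomogeneous.totalDegree_le hp

/-- degree-j part of ideal I, inside Vh N j -/
noncomputable def Wd (I : Ideal (MvPolynomial (Fin N) ℂ)) (j : ℕ) : Submodule ℂ (Vh N j) :=
  (Submodule.restrictScalars ℂ I).comap (Vh N j).subtype

/-- Hilbert function of the quotient by I -/
noncomputable def hfun (N : ℕ) (I : Ideal (MvPolynomial (Fin N) ℂ)) (j : ℕ) : ℕ :=
  Module.finrank ℂ ((Vh N j) ⧸ Wd I j)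

lemma mem_Wd {I : Ideal (MvPolynomial (Fin N) ℂ)} {j : ℕ} {x : Vh N j} :
    x ∈ Wd I j ↔ (x : MvPolynomial (Fin N) ℂ) ∈ I := Iff.rfl

lemma hfun_bot (j : ℕ) : hfun N ⊥ j = Module.finrank ℂ (Vh N j) := by
  have hW : Wd (⊥ : Ideal (MvPolynomial (Fin N) ℂ)) j = ⊥ := by
    ext v
    simp [Wd, Submodule.mem_comap]
  rw [hfun]
  exact (Submodule.quotEquivOfEqBot _ hW).finrank_eq

lemma hfun_top_of_ge {I : Ideal (MvPolynomial (Fin N) ℂ)} (hN : 0 < N)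
    {mi : Fin N → ℕ} (hXi : ∀ i, X i ^ mi i ∈ I) {j : ℕ} (hj : (∑ i, mi i) ≤ j) :
    hfun N I j = 0 := by
  have hW : Wd I j = ⊤ := by
    rw [Submodule.eq_top_iff']
    intro v
    exact homogeneous_mem_of_degree_ge hN hXi hj v.2
  have : Subsingleton ((Vh N j) ⧸ Wd I j) :=
    Submodule.Quotient.subsingleton_iff.2 hW
  exact Module.finrank_zero_of_subsingleton

lemma hfun_step {Sg : Set (MvPolynomial (Fin N) ℂ)}
    (hSg : ∀ g ∈ Sg, ∃ d, g.IsHomogeneous d)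
    {fk : MvPolynomial (Fin N) ℂ} {ek : ℕ} (hfk : fk.IsHomogeneous ek) (j : ℕ) :
    hfun N (Ideal.span Sg) j ≤ hfun N (Ideal.span (Sg ∪ {fk})) j +
      (if ek ≤ j then hfun N (Ideal.span Sg) (j - ek) else 0) := by
  classical
  set I := Ideal.span Sg with hI
  set I' := Ideal.span (Sg ∪ {fk}) with hI'
  have hWW : Wd I j ≤ Submodule.comap LinearMap.id (Wd I' j) := by
    intro v hv
    exact Ideal.span_mono Set.subset_union_left hv
  let π : ((Vh N j) ⧸ Wd I j) →ₗ[ℂ] ((Vh N j) ⧸ Wd I' j) :=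
    Submodule.mapQ _ _ LinearMap.id hWW
  have hπsurj : Function.Surjective π := by
    intro x
    obtain ⟨v, rfl⟩ := Submodule.mkQ_surjective _ x
    exact ⟨Submodule.Quotient.mk v, by simp [π, Submodule.mapQ_apply]⟩
  have hrn := LinearMap.finrank_range_add_finrank_ker π
  rw [LinearMap.range_eq_top.2 hπsurj, finrank_top] at hrn
  -- hrn : finrank (Vh⧸Wd I' j) + finrank (ker π) = finrank (Vh⧸Wd I j)
  -- characterize kernel membership
  have hker : ∀ v : Vh N j, (Submodule.Quotient.mk v ∈ LinearMap.ker π) ↔ ((v : MvPolynomial (Fin N) ℂ) ∈ I') := by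
    intro v
    rw [LinearMap.mem_ker, Submodule.mapQ_apply, LinearMap.id_apply,
      Submodule.Quotient.mk_eq_zero]
    exact Iff.rfl
  have hdecomp : ∀ v : Vh N j, (v : MvPolynomial (Fin N) ℂ) ∈ I' →
      ∃ (a c : MvPolynomial (Fin N) ℂ), a ∈ I ∧
        (v : MvPolynomial (Fin N) ℂ) = homogeneousComponent j a +
          (if ek ≤ j then (homogeneousComponent (j - ek) c) * fk else 0) := by
    intro v hv
    rw [hI', Ideal.span_union, Submodule.mem_sup] at hv
    obtain ⟨a, ha, b, hb, hab⟩ := hv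
    rw [Ideal.mem_span_singleton'] at hb
    obtain ⟨c, rfl⟩ := hb
    refine ⟨a, c, ha, ?_⟩
    have hv2 : homogeneousComponent j (a + c * fk) = v := by
      rw [hab]
      exact (homogeneousComponent_of_mem v.2).trans (if_pos rfl)
    rw [map_add, hc_mul_right hfk] at hv2
    exact hv2.symm
  by_cases hek : ek ≤ j
  · -- multiplication map from degree j - ek
    have hmem : ∀ g : Vh N (j - ek), ((g : MvPolynomial (Fin N) ℂ) * fk) ∈ Vh N j := by
      intro g
      have := (g.2 : IsHomogeneous _ (j - ek)).mul hfk
      rwa [Nat.sub_add_cancel hek] at this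
    let mulf : (Vh N (j - ek)) →ₗ[ℂ] (Vh N j) :=
      LinearMap.codRestrict (Vh N j)
        ((LinearMap.mulRight ℂ fk).comp (Vh N (j - ek)).subtype) hmem
    let ψ : (Vh N (j - ek)) →ₗ[ℂ] ((Vh N j) ⧸ Wd I j) := (Wd I j).mkQ.comp mulf
    have hψkill : Wd I (j - ek) ≤ LinearMap.ker ψ := by
      intro g hg
      rw [LinearMap.mem_ker]
      have : ((g : MvPolynomial (Fin N) ℂ) * fk) ∈ I := Ideal.mul_mem_right _ _ hg
      simp only [ψ, LinearMap.comp_apply, Submodule.mkQ_apply, Submodule.Quotient.mk_eq_zero]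
      exact this
    let ψbar := Submodule.liftQ _ ψ hψkill
    have hkerle : LinearMap.ker π ≤ LinearMap.range ψbar := by
      intro x hx
      obtain ⟨v, rfl⟩ := Submodule.mkQ_surjective _ x
      rw [Submodule.mkQ_apply] at hx ⊢
      obtain ⟨a, c, ha, hvec⟩ := hdecomp v ((hker v).1 hx)
      rw [if_pos hek] at hvec
      refine ⟨Submodule.Quotient.mk ⟨homogeneousComponent (j - ek) c,
        homogeneousComponent_isHomogeneous _ _⟩, ?_⟩
      rw [Submodule.liftQ_apply]
      simp only [ψ, LinearMap.comp_apply, Submodule.mkQ_apply]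
      rw [Submodule.Quotient.eq]
      have hsub : ((mulf ⟨homogeneousComponent (j - ek) c, homogeneousComponent_isHomogeneous _ _⟩ : Vh N j) : MvPolynomial (Fin N) ℂ) - (v : MvPolynomial (Fin N) ℂ) = - homogeneousComponent j a := by
        show (homogeneousComponent (j - ek) c) * fk - (v : MvPolynomial (Fin N) ℂ) = _
        rw [hvec]; ring
      rw [mem_Wd, Submodule.coe_sub, hsub]
      exact Submodule.neg_mem _ (hc_mem_span hSg ha j)
    have h1 : Module.finrank ℂ (LinearMap.ker π) ≤ Module.finrank ℂ (LinearMap.range ψbar) :=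
      Submodule.finrank_mono hkerle
    have h2 : Module.finrank ℂ (LinearMap.range ψbar) ≤ hfun N I (j - ek) :=
      LinearMap.finrank_range_le ψbar
    rw [if_pos hek]
    show hfun N I j ≤ hfun N I' j + hfun N I (j - ek)
    have : hfun N I j = hfun N I' j + Module.finrank ℂ (LinearMap.ker π) := hrn.symm
    omega
  · -- kernel is trivial
    have hkerbot : LinearMap.ker π = ⊥ := by
      rw [eq_bot_iff]
      intro x hx
      obtain ⟨v, rfl⟩ := Submodule.mkQ_surjective _ x
      rw [Submodule.mkQ_apply] at hx ⊢
      obtain ⟨a, c, ha, hvec⟩ := hdecomp v ((hker v).1 hx)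
      rw [if_neg hek, add_zero] at hvec
      rw [Submodule.mem_bot, Submodule.Quotient.mk_eq_zero]
      show ((v : Vh N j) : MvPolynomial (Fin N) ℂ) ∈ I
      rw [hvec]
      exact hc_mem_span hSg ha j
    have h0 : Module.finrank ℂ (LinearMap.ker π) = 0 := by
      rw [hkerbot]; exact finrank_bot ℂ _
    have hrn' : hfun N I' j + Module.finrank ℂ (LinearMap.ker π) = hfun N I j := hrn
    rw [if_neg hek]
    omega

lemma choose_le_finrank_Vh {K : ℕ} (hK : K + 1 ≤ N) (j : ℕ) :
    (j + K).choose K ≤ Module.finrank ℂ (Vh N j) := by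
  classical
  let emb : Sym (Fin (K + 1)) j → (Fin N →₀ ℕ) := fun s =>
    Multiset.toFinsupp (Multiset.map (Fin.castLE hK) (s : Multiset (Fin (K + 1))))
  have hembInj : Function.Injective emb := by
    intro s t hst
    have h1 := Multiset.toFinsupp.injective hst
    have h2 := Multiset.map_injective (Fin.castLE_injective hK) h1
    exact Sym.coe_injective h2
  have hdeg : ∀ s, (emb s).degree = j := by
    intro s
    rw [Finsupp.degree_apply]
    have : ((emb s).support : Finset (Fin N)) = (Multiset.map (Fin.castLE hK) (s : Multiset (Fin (K + 1)))).toFinset :=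
      Multiset.toFinsupp_support _
    rw [this]
    have : ∀ a, (emb s) a = (Multiset.map (Fin.castLE hK) (s : Multiset (Fin (K + 1)))).count a := fun a =>
      Multiset.toFinsupp_apply _ _
    calc (∑ i ∈ (Multiset.map (Fin.castLE hK) (s : Multiset (Fin (K + 1)))).toFinset, (emb s) i)
        = ∑ i ∈ (Multiset.map (Fin.castLE hK) (s : Multiset (Fin (K + 1)))).toFinset,
            (Multiset.map (Fin.castLE hK) (s : Multiset (Fin (K + 1)))).count i := by
          exact Finset.sum_congr rfl fun i _ => this i
      _ = Multiset.card (Multiset.map (Fin.castLE hK) (s : Multiset (Fin (K + 1)))) :=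
          Multiset.toFinset_sum_count_eq _
      _ = j := by rw [Multiset.card_map]; exact s.2
  have hfam : ∀ s : Sym (Fin (K + 1)) j, (monomial (emb s) (1 : ℂ)) ∈ Vh N j := by
    intro s
    exact isHomogeneous_monomial _ (hdeg s)
  have hli : LinearIndependent ℂ (fun s : Sym (Fin (K + 1)) j =>
      (⟨monomial (emb s) (1 : ℂ), hfam s⟩ : Vh N j)) := by
    apply LinearIndependent.of_comp (Vh N j).subtype
    have hbase := (basisMonomials (Fin N) ℂ).linearIndependent.comp emb hembInj
    have : ((Vh N j).subtype ∘ fun s : Sym (Fin (K + 1)) j =>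
        (⟨monomial (emb s) (1 : ℂ), hfam s⟩ : Vh N j)) = fun s => monomial (emb s) (1 : ℂ) := rfl
    rw [this]
    have hcoe : (fun s : Sym (Fin (K + 1)) j => monomial (emb s) (1 : ℂ)) =
        (basisMonomials (Fin N) ℂ) ∘ emb := by
      funext s
      rw [Function.comp_apply, coe_basisMonomials]
    rw [hcoe]
    exact hbase
  have hcard := hli.fintype_card_le_finrank
  have hcs : Fintype.card (Sym (Fin (K + 1)) j) = (j + K).choose K := by
    rw [Sym.card_sym_eq_multichoose, Nat.multichoose_eq, Fintype.card_fin]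
    have h1 : K + 1 + j - 1 = K + j := by omega
    rw [h1]
    have h2 : (K + j).choose j = (K + j).choose ((K + j) - K) := by
      congr 1
      omega
    have h3 := Nat.choose_symm (show K ≤ K + j by omega)
    rw [h2, h3]
    congr 1
    omega
  omega

end Hilbert


section Key

theorem key_exists {N K : ℕ} (hKN : K < N) (f : Fin K → MvPolynomial (Fin N) ℂ)
    (e : Fin K → ℕ) (he : ∀ i, 1 ≤ e i) (hf : ∀ i, (f i).IsHomogeneous (e i)) :
    ∃ w : Fin N → ℂ, w ≠ 0 ∧ ∀ i, eval w (f i) = 0 := by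
  classical
  have hN : 0 < N := by omega
  by_contra hcon
  push_neg at hcon
  -- hcon : ∀ w, w ≠ 0 → ∃ i, eval w (f i) ≠ 0
  have hcon' : ∀ w : Fin N → ℂ, (∀ i, eval w (f i) = 0) → w = 0 := by
    intro w hw
    by_contra hw0
    obtain ⟨i, hi⟩ := hcon w hw0
    exact hi (hw i)
  rcases Nat.eq_zero_or_pos K with rfl | hKpos
  · have h1 : (fun _ => 1 : Fin N → ℂ) = 0 := hcon' _ (fun i => Fin.elim0 i)
    have := congrFun h1 ⟨0, hN⟩
    simp at this
  -- the partial ideals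
  set Sgs : ℕ → Set (MvPolynomial (Fin N) ℂ) := fun k => f '' {i : Fin K | (i : ℕ) < k} with hSgs
  set Ib : ℕ → Ideal (MvPolynomial (Fin N) ℂ) := fun k => Ideal.span (Sgs k) with hIb
  have hSgsHom : ∀ k, ∀ g ∈ Sgs k, ∃ d, g.IsHomogeneous d := by
    rintro k g ⟨i, _, rfl⟩
    exact ⟨e i, hf i⟩
  have hSgs_succ : ∀ (k : ℕ) (hk : k < K), Sgs (k + 1) = Sgs k ∪ {f ⟨k, hk⟩} := by
    intro k hk
    ext g
    constructor
    · rintro ⟨i, hi, rfl⟩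
      have hi' : (i : ℕ) < k + 1 := hi
      rcases Nat.lt_succ_iff_lt_or_eq.1 hi' with h | h
      · exact Or.inl ⟨i, h, rfl⟩
      · refine Or.inr ?_
        have : i = ⟨k, by omega⟩ := Fin.ext h
        rw [this]
        rfl
    · rintro (⟨i, hi, rfl⟩ | h)
      · have hi' : (i : ℕ) < k := hi
        exact ⟨i, show (i : ℕ) < k + 1 by omega, rfl⟩
      · exact ⟨⟨k, by omega⟩, show k < k + 1 by omega, h.symm⟩
  -- zero locus of the full ideal is {0}
  have hzl : MvPolynomial.zeroLocus ℂ (Ib K) = {0} := by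
    apply Set.eq_singleton_iff_unique_mem.2
    constructor
    · rw [MvPolynomial.mem_zeroLocus_iff]
      intro p hp
      have hle : Ib K ≤ RingHom.ker (eval (0 : Fin N → ℂ)) := by
        rw [hIb, Ideal.span_le]
        rintro g ⟨i, _, rfl⟩
        rw [SetLike.mem_coe, RingHom.mem_ker]
        have : coeff 0 (f i) = 0 := by
          apply (hf i).coeff_eq_zero
          rw [map_zero]
          have := he i
          omega
        rw [eval_zero]
        exact this
      exact hle hp
    · intro w hw
      rw [MvPolynomial.mem_zeroLocus_iff] at hw
      apply hcon'
      intro i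
      exact hw (f i) (Ideal.subset_span ⟨i, i.isLt, rfl⟩)
  -- Nullstellensatz: each variable is in the radical
  have hrad : ∀ i : Fin N, ∃ m : ℕ, X i ^ m ∈ Ib K := by
    intro i
    have hX : X i ∈ MvPolynomial.vanishingIdeal ℂ (MvPolynomial.zeroLocus ℂ (Ib K)) := by
      rw [MvPolynomial.mem_vanishingIdeal_iff]
      intro x hx
      rw [hzl] at hx
      rw [Set.mem_singleton_iff] at hx
      subst hx
      simp
    rw [MvPolynomial.vanishingIdeal_zeroLocus_eq_radical, Ideal.mem_radical_iff] at hX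
    exact hX
  choose mi hmi using hrad
  -- the main claim by induction
  have hclaim : ∀ k, k ≤ K → ∀ j, (j + K).choose K ≤ Sit k (hfun N (Ib k)) j := by
    intro k
    induction k with
    | zero =>
      intro _ j
      have h0 : Ib 0 = ⊥ := by
        show Ideal.span (Sgs 0) = ⊥
        have hempty : Sgs 0 = ∅ := by
          ext g
          constructor
          · rintro ⟨i, hi, rfl⟩
            exact absurd (show (i : ℕ) < 0 from hi) (by omega)
          · intro h
            exact absurd h (Set.notMem_empty g)
        rw [hempty, Ideal.span_empty]
      show (j + K).choose K ≤ hfun N (Ib 0) j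
      rw [h0, hfun_bot]
      exact choose_le_finrank_Vh (by omega) j
    | succ k ih =>
      intro hk1 j
      have hk : k < K := by omega
      have IH := ih (by omega)
      set ek := e ⟨k, hk⟩ with hek
      have hekpos : 1 ≤ ek := he _
      have SI : ∀ j', hfun N (Ib k) j' ≤ hfun N (Ib (k + 1)) j' +
          (if ek ≤ j' then hfun N (Ib k) (j' - ek) else 0) := by
        intro j'
        have := hfun_step (hSgsHom k) (hf ⟨k, hk⟩) j'
        rwa [← hSgs_succ k hk] at this
      have A := Sit_step SI (k + 1) j
      -- lower bound for Sit (k+1) (hfun (Ib k)) j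
      have B : (j + K).choose K + (if ek ≤ j then Sit (k + 1) (hfun N (Ib k)) (j - ek) else 0) ≤
          Sit (k + 1) (hfun N (Ib k)) j := by
        by_cases hej : ek ≤ j
        · rw [if_pos hej]
          have hsplit : Sit (k + 1) (hfun N (Ib k)) j =
              (∑ i ∈ Finset.range j, Sit k (hfun N (Ib k)) i) + Sit k (hfun N (Ib k)) j := by
            show S (Sit k (hfun N (Ib k))) j = _
            rw [S, Finset.sum_range_succ]
          have hsub : Sit (k + 1) (hfun N (Ib k)) (j - ek) ≤
              ∑ i ∈ Finset.range j, Sit k (hfun N (Ib k)) i := by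
            show S (Sit k (hfun N (Ib k))) (j - ek) ≤ _
            exact Finset.sum_le_sum_of_subset (Finset.range_subset_range.2 (by omega))
          have := IH j
          omega
        · rw [if_neg hej, add_zero]
          exact le_trans (IH j) (le_S _ j)
      omega
  have hKfin := hclaim K le_rfl
  -- vanishing beyond M
  set M := ∑ i, mi i with hM
  have hvanish : ∀ i, M ≤ i → hfun N (Ib K) i = 0 := fun i hi =>
    hfun_top_of_ge hN hmi hi
  set D := S (hfun N (Ib K)) M with hD
  have hDb : ∀ j, S (hfun N (Ib K)) j ≤ D := fun j => S_le_of_supported hvanish j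
  obtain ⟨K', rfl⟩ : ∃ K', K = K' + 1 := ⟨K - 1, by omega⟩
  set j := D * (K' + 1) + 1 with hj
  have hub : Sit (K' + 1) (hfun N (Ib (K' + 1))) j ≤ D * (j + K').choose K' := by
    rw [Sit_succ_eq]
    exact Sit_le_choose hDb K' j
  have hlb := hKfin j
  have hCpos : 0 < (j + K').choose K' := Nat.choose_pos (by omega)
  have hmul := Nat.add_one_mul_choose_eq (j + K') K'
  -- (j + K' + 1) * choose (j+K') K' = choose (j+K'+1) (K'+1) * (K'+1)
  have hfinal : (j + K' + 1) * (j + K').choose K' ≤ (D * (K' + 1)) * (j + K').choose K' := by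
    have h1 : (j + (K' + 1)).choose (K' + 1) ≤ D * (j + K').choose K' := le_trans hlb hub
    calc (j + K' + 1) * (j + K').choose K' = (j + K' + 1).choose (K' + 1) * (K' + 1) := by
          rw [← hmul]
      _ ≤ (D * (j + K').choose K') * (K' + 1) := by
          have h2 : j + K' + 1 = j + (K' + 1) := by omega
          exact Nat.mul_le_mul_right _ (by rw [h2]; exact h1)
      _ = (D * (K' + 1)) * (j + K').choose K' := by ring
  have := Nat.le_of_mul_le_mul_right hfinal hCpos
  omega

end Key


section Lines

variable {N : ℕ}

/-- Substitute `x_i ↦ u_i • x₀ + x_{i+1}` into `F` and expand as a polynomial in `x₀`. -/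
noncomputable def Phi (u : Fin N → ℂ) (F : MvPolynomial (Fin N) ℂ) :
    Polynomial (MvPolynomial (Fin N) ℂ) :=
  finSuccEquiv ℂ N (aeval (fun i : Fin N => X i.succ + C (u i) * X (0 : Fin (N + 1))) F)

lemma Phi_sub_homog {u : Fin N → ℂ} {F : MvPolynomial (Fin N) ℂ} {d : ℕ}
    (hF : F.IsHomogeneous d) :
    (aeval (fun i : Fin N => X i.succ + C (u i) * X (0 : Fin (N + 1))) F).IsHomogeneous d := by
  have := hF.aeval (fun i : Fin N => X i.succ + C (u i) * X (0 : Fin (N + 1))) (n := 1) ?_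
  · rwa [one_mul] at this
  · intro i
    exact (isHomogeneous_X _ _).add (isHomogeneous_C_mul_X _ _)

lemma Phi_coeff_homog {u : Fin N → ℂ} {F : MvPolynomial (Fin N) ℂ} {d : ℕ}
    (hF : F.IsHomogeneous d) {j : ℕ} (hj : j ≤ d) :
    ((Phi u F).coeff j).IsHomogeneous (d - j) :=
  (Phi_sub_homog hF).finSuccEquiv_coeff_isHomogeneous j (d - j) (by omega)

lemma degree_cons (j : ℕ) (m : Fin N →₀ ℕ) : (Finsupp.cons j m).degree = j + m.degree := by
  have h1 : ∀ (f : Fin (N + 1) →₀ ℕ), f.degree = f.sum fun _ e => e := by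
    intro f
    rw [Finsupp.degree_eq_weight_one]
    simp [Finsupp.weight_apply, Finsupp.sum]
  have h2 : ∀ (f : Fin N →₀ ℕ), f.degree = f.sum fun _ e => e := by
    intro f
    rw [Finsupp.degree_eq_weight_one]
    simp [Finsupp.weight_apply, Finsupp.sum]
  rw [h1, h2, Finsupp.sum_cons]

lemma Phi_coeff_eq_zero {u : Fin N → ℂ} {F : MvPolynomial (Fin N) ℂ} {d : ℕ}
    (hF : F.IsHomogeneous d) {j : ℕ} (hj : d < j) :
    (Phi u F).coeff j = 0 := by
  apply MvPolynomial.ext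
  intro m
  rw [Phi, finSuccEquiv_coeff_coeff, coeff_zero]
  apply (Phi_sub_homog hF).coeff_eq_zero
  rw [degree_cons]
  omega

lemma Phi_eval (u : Fin N → ℂ) (F : MvPolynomial (Fin N) ℂ) (w : Fin N → ℂ) (s : ℂ) :
    eval (fun i => w i + u i * s) F =
      Polynomial.eval s (Polynomial.map (eval w) (Phi u F)) := by
  rw [Phi, ← eval_eq_eval_mv_eval']
  have hcomp : (eval (Fin.cons s w : Fin (N + 1) → ℂ)).comp
      ((aeval (fun i : Fin N => X i.succ + C (u i) * X (0 : Fin (N + 1)))).toRingHom :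
        MvPolynomial (Fin N) ℂ →+* MvPolynomial (Fin (N + 1)) ℂ) =
      (eval (fun i => w i + u i * s) : MvPolynomial (Fin N) ℂ →+* ℂ) := by
    apply MvPolynomial.ringHom_ext
    · intro r
      simp
    · intro i
      simp [Fin.cons_succ, Fin.cons_zero]
  exact (RingHom.congr_fun hcomp F).symm

lemma eval_smul_homog {g : MvPolynomial (Fin N) ℂ} {m : ℕ} (hg : g.IsHomogeneous m)
    (b : ℂ) (w : Fin N → ℂ) : eval (b • w) g = b ^ m * eval w g := by
  conv_lhs => rw [as_sum g]
  conv_rhs => rw [as_sum g]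
  rw [map_sum, map_sum, Finset.mul_sum]
  apply Finset.sum_congr rfl
  intro a ha
  rw [eval_monomial, eval_monomial]
  have hdeg : a.degree = m := by
    rw [Finsupp.degree_eq_weight_one]
    exact hg (mem_support_iff.1 ha)
  have hprod : (a.prod fun n e => (b • w) n ^ e) = b ^ m * a.prod fun n e => w n ^ e := by
    have h1 : (a.prod fun n e => (b • w) n ^ e) = a.prod fun n e => (b ^ e) * (w n ^ e) := by
      apply Finsupp.prod_congr
      intro n _
      rw [Pi.smul_apply, smul_eq_mul, mul_pow]
    rw [h1, Finsupp.prod_mul]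
    congr 1
    rw [← hdeg, Finsupp.degree_apply, Finsupp.prod, Finset.prod_pow_eq_pow_sum]
  rw [hprod]
  ring

lemma Phi_coeff_d_eval_zero {u : Fin N → ℂ} {F : MvPolynomial (Fin N) ℂ} {d : ℕ}
    (hF : F.IsHomogeneous d) (hu : eval u F = 0) (w : Fin N → ℂ) :
    eval w ((Phi u F).coeff d) = 0 := by
  -- first: eval 0 of coefficients below d vanish; the value at w equals value at 0
  have hcw : eval w ((Phi u F).coeff d) = eval ((0 : ℂ) • w) ((Phi u F).coeff d) := by
    rw [eval_smul_homog (by simpa using Phi_coeff_homog hF (le_refl d)) 0 w]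
    simp
  have hkey : Polynomial.map (eval (0 : Fin N → ℂ)) (Phi u F) =
      Polynomial.monomial d (eval (0 : Fin N → ℂ) ((Phi u F).coeff d)) := by
    apply Polynomial.ext
    intro j
    rw [Polynomial.coeff_map, Polynomial.coeff_monomial]
    rcases lt_trichotomy j d with h | rfl | h
    · rw [if_neg (by omega)]
      have hhom := Phi_coeff_homog (u := u) hF (le_of_lt h)
      have : coeff 0 ((Phi u F).coeff j) = 0 := by
        apply hhom.coeff_eq_zero
        rw [map_zero]
        omega
      rw [eval_zero]
      exact this
    · rw [if_pos rfl]
    · rw [if_neg (by omega), Phi_coeff_eq_zero hF h, map_zero]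
  have heval := Phi_eval u F 0 1
  rw [hkey, Polynomial.eval_monomial] at heval
  have hlhs : (fun i => (0 : Fin N → ℂ) i + u i * 1) = u := by
    funext i; simp
  rw [hlhs, hu] at heval
  rw [hcw, zero_smul]
  have : eval (0 : Fin N → ℂ) ((Phi u F).coeff d) = 0 := by
    have h1d : (1 : ℂ) ^ d = 1 := one_pow d
    rw [h1d, mul_one] at heval
    exact heval.symm
  exact this

lemma line_vanish {F : MvPolynomial (Fin N) ℂ} {d : ℕ} (hF : F.IsHomogeneous d)
    {u w : Fin N → ℂ} (hu : eval u F = 0)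
    (hw : ∀ j, j < d → eval w ((Phi u F).coeff j) = 0)
    (a b : ℂ) : eval (a • u + b • w) F = 0 := by
  have hmap : Polynomial.map (eval (b • w)) (Phi u F) = 0 := by
    apply Polynomial.ext
    intro j
    rw [Polynomial.coeff_map, Polynomial.coeff_zero]
    rcases lt_trichotomy j d with h | rfl | h
    · rw [eval_smul_homog (Phi_coeff_homog hF (le_of_lt h)) b w, hw j h, mul_zero]
    · rw [eval_smul_homog (Phi_coeff_homog hF (le_refl j)) b w,
        Phi_coeff_d_eval_zero hF hu w, mul_zero]
    · rw [Phi_coeff_eq_zero hF h, map_zero]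
  have heval := Phi_eval u F (b • w) a
  rw [hmap, Polynomial.eval_zero] at heval
  have : (fun i => (b • w) i + u i * a) = a • u + b • w := by
    funext i
    simp [mul_comm]
    ring
  rwa [this] at heval

end Lines


section Plumbing

variable {N : ℕ}

lemma Phi_coeff_zero {u : Fin N → ℂ} {F : MvPolynomial (Fin N) ℂ} {d : ℕ}
    (hF : F.IsHomogeneous d) : (Phi u F).coeff 0 = F := by
  apply MvPolynomial.IsHomogeneous.funext (n := d)
  · simpa using Phi_coeff_homog (u := u) hF (Nat.zero_le d)
  · exact hF
  · intro x
    have heval := Phi_eval u F x 0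
    have h1 : (fun i => x i + u i * 0) = x := by funext i; ring_nf
    rw [h1] at heval
    rw [heval, ← Polynomial.coeff_zero_eq_eval_zero, Polynomial.coeff_map]

lemma exists_dual_pair {x y : Fin N → ℂ} (h : LinearIndependent ℂ ![x, y]) :
    ∃ φ : (Fin N → ℂ) →ₗ[ℂ] ℂ, φ x = 1 ∧ φ y = 1 := by
  classical
  have hxy : x ≠ y := by
    intro hxy
    have hinj := h.injective
    have : (0 : Fin 2) = 1 := hinj (by simp [hxy])
    simp at this
  set s : Set (Fin N → ℂ) := Set.range ![x, y] with hs
  have hsub : LinearIndepOn ℂ id s := (linearIndepOn_id_range_iff h.injective).2 h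
  let b := Module.Basis.extend hsub
  have hxs : x ∈ hsub.extend (Set.subset_univ s) :=
    hsub.subset_extend _ ⟨0, rfl⟩
  have hys : y ∈ hsub.extend (Set.subset_univ s) :=
    hsub.subset_extend _ ⟨1, rfl⟩
  let ix : hsub.extend (Set.subset_univ s) := ⟨x, hxs⟩
  let iy : hsub.extend (Set.subset_univ s) := ⟨y, hys⟩
  have hixiy : ix ≠ iy := fun hc => hxy (congrArg Subtype.val hc)
  refine ⟨b.coord ix + b.coord iy, ?_, ?_⟩
  · have hbx : b ix = x := Module.Basis.extend_apply_self hsub ix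
    rw [LinearMap.add_apply, ← hbx, Module.Basis.coord_apply, Module.Basis.coord_apply,
      Module.Basis.repr_self_apply, Module.Basis.repr_self_apply]
    rw [if_pos rfl, if_neg hixiy]
    norm_num
  · have hby : b iy = y := Module.Basis.extend_apply_self hsub iy
    rw [LinearMap.add_apply, ← hby, Module.Basis.coord_apply, Module.Basis.coord_apply,
      Module.Basis.repr_self_apply, Module.Basis.repr_self_apply]
    rw [if_neg (Ne.symm hixiy), if_pos rfl]
    norm_num

lemma exists_dual_single {x : Fin N → ℂ} (hx : x ≠ 0) :
    ∃ φ : (Fin N → ℂ) →ₗ[ℂ] ℂ, φ x = 1 := by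
  classical
  set s : Set (Fin N → ℂ) := {x} with hs
  have hsub : LinearIndepOn ℂ id s := by
    rw [hs]
    exact (linearIndepOn_singleton_iff ℂ).2 hx
  let b := Module.Basis.extend hsub
  have hxs : x ∈ hsub.extend (Set.subset_univ s) := hsub.subset_extend _ rfl
  let ix : hsub.extend (Set.subset_univ s) := ⟨x, hxs⟩
  refine ⟨b.coord ix, ?_⟩
  have hbx : b ix = x := Module.Basis.extend_apply_self hsub ix
  rw [← hbx, Module.Basis.coord_apply, Module.Basis.repr_self_apply, if_pos rfl]

/-- a linear polynomial realizing a linear functional -/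
noncomputable def Lpoly (φ : (Fin N → ℂ) →ₗ[ℂ] ℂ) : MvPolynomial (Fin N) ℂ :=
  ∑ i, C (φ (fun j => if i = j then 1 else 0)) * X i

lemma Lpoly_homog (φ : (Fin N → ℂ) →ₗ[ℂ] ℂ) : (Lpoly φ).IsHomogeneous 1 :=
  IsHomogeneous.sum _ _ _ (fun i _ => isHomogeneous_C_mul_X _ _)

lemma Lpoly_eval (φ : (Fin N → ℂ) →ₗ[ℂ] ℂ) (v : Fin N → ℂ) :
    eval v (Lpoly φ) = φ v := by
  rw [Lpoly, map_sum]
  rw [LinearMap.pi_apply_eq_sum_univ φ v]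
  apply Finset.sum_congr rfl
  intro i _
  rw [eval_mul, eval_C, eval_X]
  rw [smul_eq_mul]
  ring

theorem key_exists' {N : ℕ} (ι : Type) [Fintype ι] (hι : Fintype.card ι < N)
    (f : ι → MvPolynomial (Fin N) ℂ) (e : ι → ℕ) (he : ∀ i, 1 ≤ e i)
    (hf : ∀ i, (f i).IsHomogeneous (e i)) :
    ∃ w : Fin N → ℂ, w ≠ 0 ∧ ∀ i, eval w (f i) = 0 := by
  classical
  let E := Fintype.equivFin ι
  obtain ⟨w, hw0, hw⟩ := key_exists (K := Fintype.card ι) hι (fun k => f (E.symm k))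
    (fun k => e (E.symm k)) (fun k => he _) (fun k => hf _)
  refine ⟨w, hw0, fun i => ?_⟩
  have := hw (E i)
  rwa [Equiv.symm_apply_apply] at this

end Plumbing

end Stmt11Aux

namespace Stmt11Aux

lemma build_line {n d : ℕ} {F : MvPolynomial (Fin (n + 1)) ℂ} (hF : F.IsHomogeneous d)
    {u w : Fin (n + 1) → ℂ} (hu0 : u ≠ 0) (hw0 : w ≠ 0)
    (hindep : LinearIndependent ℂ ![u, w])
    (huF : eval u F = 0) (hcond : ∀ j, j < d → eval w ((Phi u F).coeff j) = 0) :
    ∃ l : Set (Pn n), IsLine n l ∧ l ⊆ algZeroLocus n {F} ∧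
      Projectivization.mk ℂ u hu0 ∈ l ∧ Projectivization.mk ℂ w hw0 ∈ l := by
  classical
  set W : Submodule ℂ (Fin (n + 1) → ℂ) := Submodule.span ℂ (Set.range ![u, w]) with hW
  have hfr : Module.finrank ℂ W = 2 := by
    rw [hW, finrank_span_eq_card hindep]
    simp
  refine ⟨{x | Projectivization.submodule x ≤ W}, ⟨W, hfr, rfl⟩, ?_, ?_, ?_⟩
  · intro x hx
    intro f hf v hv
    rw [Set.mem_singleton_iff] at hf
    subst hf
    have hvW : v ∈ W := hx hv
    rw [hW, Submodule.mem_span_range_iff_exists_fun] at hvW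
    obtain ⟨c, hc⟩ := hvW
    rw [Fin.sum_univ_two] at hc
    simp only [Matrix.cons_val_zero, Matrix.cons_val_one, Matrix.head_cons] at hc
    rw [← hc]
    exact line_vanish hF huF hcond (c 0) (c 1)
  · show Projectivization.submodule _ ≤ W
    rw [Projectivization.submodule_mk, Submodule.span_singleton_le_iff_mem]
    exact Submodule.subset_span ⟨0, rfl⟩
  · show Projectivization.submodule _ ≤ W
    rw [Projectivization.submodule_mk, Submodule.span_singleton_le_iff_mem]
    exact Submodule.subset_span ⟨1, rfl⟩

end Stmt11Aux

/-- Let `X ⊂ ℙ^n` be an irreducible hypersurface of degree `d` over `ℂ` with `n ≥ 2d`.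
Then any two points of `X` can be joined by a connected chain of two lines contained
in `X`. -/
theorem stmt11 (n d : ℕ) (hd : 1 ≤ d) (hn : 2 * d ≤ n) (F : MvPolynomial (Fin (n + 1)) ℂ)
    (hF : F.IsHomogeneous d) (hF0 : F ≠ 0)
    (X : Set (Pn n)) (hX : X = algZeroLocus n {F}) (hXirr : IsIrrVariety n X) :
    ∀ p ∈ X, ∀ q ∈ X,
      ∃ l₁ l₂ : Set (Pn n), IsLine n l₁ ∧ IsLine n l₂ ∧ l₁ ⊆ X ∧ l₂ ⊆ X ∧
        p ∈ l₁ ∧ q ∈ l₂ ∧ (l₁ ∩ l₂).Nonempty := by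
  classical
  intro p hp q hq
  subst hX
  set vp := p.rep with hvp
  have hvp0 : vp ≠ 0 := p.rep_nonzero
  have hrepmem : ∀ r : Pn n, r.rep ∈ Projectivization.submodule r := by
    intro r
    rw [Projectivization.submodule_eq]
    exact Submodule.mem_span_singleton_self _
  have hpF : eval vp F = 0 := hp F (Set.mem_singleton F) vp (hrepmem p)
  by_cases hpq : p = q
  · -- single line through p suffices
    subst hpq
    obtain ⟨φ, hφp⟩ := Stmt11Aux.exists_dual_single hvp0
    set conds : Fin d ⊕ Unit → MvPolynomial (Fin (n + 1)) ℂ :=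
      Sum.elim (fun j : Fin d => (Stmt11Aux.Phi vp F).coeff j) (fun _ => Stmt11Aux.Lpoly φ)
      with hconds
    set degs : Fin d ⊕ Unit → ℕ := Sum.elim (fun j : Fin d => d - (j : ℕ)) (fun _ => 1)
      with hdegs
    obtain ⟨w, hw0, hwz⟩ := Stmt11Aux.key_exists' (Fin d ⊕ Unit)
      (by simp; omega) conds degs
      (by rintro (j | _)
          · have := j.isLt; simp [hdegs]; omega
          · simp [hdegs])
      (by rintro (j | _)
          · have hj := j.isLt
            exact Stmt11Aux.Phi_coeff_homog hF (by omega)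
          · exact Stmt11Aux.Lpoly_homog φ)
    have hcond : ∀ j, j < d → eval w ((Stmt11Aux.Phi vp F).coeff j) = 0 := by
      intro j hj
      exact hwz (Sum.inl ⟨j, hj⟩)
    have hφw : φ w = 0 := by
      have h := hwz (Sum.inr ())
      rw [hconds, Sum.elim_inr, Stmt11Aux.Lpoly_eval] at h
      exact h
    have hindep : LinearIndependent ℂ ![vp, w] := by
      rw [LinearIndependent.pair_iff]
      intro s t hst
      have h1 : φ (s • vp + t • w) = 0 := by rw [hst, map_zero]
      rw [map_add, map_smul, map_smul, hφp, hφw] at h1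
      have hs : s = 0 := by
        simpa using h1
      refine ⟨hs, ?_⟩
      rw [hs, zero_smul, zero_add] at hst
      rcases smul_eq_zero.1 hst with h | h
      · exact h
      · exact absurd h hw0
    obtain ⟨l, hl, hlX, hul, hwl⟩ := Stmt11Aux.build_line hF hvp0 hw0 hindep hpF hcond
    have hpl : p ∈ l := by
      rw [← Projectivization.mk_rep p]
      exact hul
    exact ⟨l, l, hl, hl, hlX, hlX, hpl, hpl, ⟨p, hpl, hpl⟩⟩
  · -- two points
    set vq := q.rep with hvq
    have hvq0 : vq ≠ 0 := q.rep_nonzero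
    have hqF : eval vq F = 0 := hq F (Set.mem_singleton F) vq (hrepmem q)
    have hindpq : LinearIndependent ℂ ![vp, vq] := by
      rw [LinearIndependent.pair_iff]
      intro s t hst
      by_cases ht : t = 0
      · subst ht
        rw [zero_smul, add_zero] at hst
        rcases smul_eq_zero.1 hst with h | h
        · exact ⟨h, rfl⟩
        · exact absurd h hvp0
      · exfalso
        have h2 : t • vq = (-s) • vp := by
          have h2' : t • vq + s • vp = 0 := by
            calc t • vq + s • vp = s • vp + t • vq := add_comm _ _
              _ = 0 := hst
          rw [neg_smul, eq_neg_iff_add_eq_zero]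
          exact h2'
        have h3 : (t⁻¹ * (-s)) • vp = vq := by
          rw [mul_smul, ← h2, inv_smul_smul₀ ht]
        have : q = p := by
          rw [← Projectivization.mk_rep p, ← Projectivization.mk_rep q]
          rw [Projectivization.mk_eq_mk_iff']
          exact ⟨t⁻¹ * (-s), h3⟩
        exact hpq this.symm
    obtain ⟨φ, hφp, hφq⟩ := Stmt11Aux.exists_dual_pair hindpq
    set conds : (Fin d ⊕ Fin (d - 1) ⊕ Unit) → MvPolynomial (Fin (n + 1)) ℂ :=
      Sum.elim (fun j : Fin d => (Stmt11Aux.Phi vp F).coeff j)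
        (Sum.elim (fun j : Fin (d - 1) => (Stmt11Aux.Phi vq F).coeff ((j : ℕ) + 1))
          (fun _ => Stmt11Aux.Lpoly φ)) with hconds
    set degs : (Fin d ⊕ Fin (d - 1) ⊕ Unit) → ℕ :=
      Sum.elim (fun j : Fin d => d - (j : ℕ))
        (Sum.elim (fun j : Fin (d - 1) => d - ((j : ℕ) + 1)) (fun _ => 1)) with hdegs
    obtain ⟨w, hw0, hwz⟩ := Stmt11Aux.key_exists' (Fin d ⊕ Fin (d - 1) ⊕ Unit)
      (by simp; omega) conds degs
      (by rintro (j | j | _)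
          · have := j.isLt; simp [hdegs]; omega
          · have := j.isLt; simp [hdegs]; omega
          · simp [hdegs])
      (by rintro (j | j | _)
          · have hj := j.isLt
            exact Stmt11Aux.Phi_coeff_homog hF (by omega)
          · have hj := j.isLt
            exact Stmt11Aux.Phi_coeff_homog hF (by omega)
          · exact Stmt11Aux.Lpoly_homog φ)
    have hcondp : ∀ j, j < d → eval w ((Stmt11Aux.Phi vp F).coeff j) = 0 := by
      intro j hj
      exact hwz (Sum.inl ⟨j, hj⟩)
    have hwF : eval w F = 0 := by
      have := hcondp 0 (by omega)
      rwa [Stmt11Aux.Phi_coeff_zero hF] at this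
    have hcondq : ∀ j, j < d → eval w ((Stmt11Aux.Phi vq F).coeff j) = 0 := by
      intro j hj
      match j with
      | 0 =>
        rw [Stmt11Aux.Phi_coeff_zero hF]
        exact hwF
      | (j' + 1) =>
        exact hwz (Sum.inr (Sum.inl ⟨j', by omega⟩))
    have hφw : φ w = 0 := by
      have h := hwz (Sum.inr (Sum.inr ()))
      rw [hconds, Sum.elim_inr, Sum.elim_inr, Stmt11Aux.Lpoly_eval] at h
      exact h
    have hindep1 : LinearIndependent ℂ ![vp, w] := by
      rw [LinearIndependent.pair_iff]
      intro s t hst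
      have h1 : φ (s • vp + t • w) = 0 := by rw [hst, map_zero]
      rw [map_add, map_smul, map_smul, hφp, hφw] at h1
      have hs : s = 0 := by simpa using h1
      refine ⟨hs, ?_⟩
      rw [hs, zero_smul, zero_add] at hst
      rcases smul_eq_zero.1 hst with h | h
      · exact h
      · exact absurd h hw0
    have hindep2 : LinearIndependent ℂ ![vq, w] := by
      rw [LinearIndependent.pair_iff]
      intro s t hst
      have h1 : φ (s • vq + t • w) = 0 := by rw [hst, map_zero]
      rw [map_add, map_smul, map_smul, hφq, hφw] at h1
      have hs : s = 0 := by simpa using h1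
      refine ⟨hs, ?_⟩
      rw [hs, zero_smul, zero_add] at hst
      rcases smul_eq_zero.1 hst with h | h
      · exact h
      · exact absurd h hw0
    obtain ⟨l₁, hl1, hl1X, hul1, hwl1⟩ := Stmt11Aux.build_line hF hvp0 hw0 hindep1 hpF hcondp
    obtain ⟨l₂, hl2, hl2X, hul2, hwl2⟩ := Stmt11Aux.build_line hF hvq0 hw0 hindep2 hqF hcondq
    have hpl : p ∈ l₁ := by
      rw [← Projectivization.mk_rep p]
      exact hul1
    have hql : q ∈ l₂ := by
      rw [← Projectivization.mk_rep q]
      exact hul2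
    exact ⟨l₁, l₂, hl1, hl2, hl1X, hl2X, hpl, hql,
      ⟨Projectivization.mk ℂ w hw0, hwl1, hwl2⟩⟩
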